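/- Let M be an A-module algebra over a weak *-Hopf algebra A, N = M^A its fixed point algebra, and suppose there is a dual pair (l, λ) of left integrals with Σ 1₍₁₎·⟨λ, 1₍₂₎⟩ = 1_A (λ normalized). Write N'∩M := {x ∈ M : x·n = n·x for all n ∈ N}. Then: (i) a▷x ∈ N'∩M for every x ∈ N'∩M and a ∈ A; (ii) in the crossed product M⋊A, the centralizer of {n⋊1 : n ∈ N} equals the image of (N'∩M)⊗A, i.e. {y ∈ M⋊A : y·(n⋊1) = (n⋊1)·y for all n ∈ N} = span{x⋊a : x ∈ N'∩M, a ∈ A}; (iii) in particular N'∩M = A▷1_M if and only if the centralizer of {n⋊1 : n ∈ N} in M⋊A equals {1_M⋊a : a ∈ A}. -/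

import Mathlib

open scoped TensorProduct

noncomputable section

/-- The componentwise star operation on a tensor product of star algebras,
as an additive map (it is conjugate-linear, hence not a `LinearMap`). -/
def tensorStar (A B : Type) [Ring A] [Algebra ℂ A] [StarRing A] [StarModule ℂ A]
    [Ring B] [Algebra ℂ B] [StarRing B] [StarModule ℂ B] :
    A ⊗[ℂ] B →+ A ⊗[ℂ] B :=
  TensorProduct.liftAddHom
    (AddMonoidHom.mk'
      (fun a => AddMonoidHom.mk' (fun b => star a ⊗ₜ[ℂ] star b)
        (fun x y => by
          show star a ⊗ₜ[ℂ] star (x + y) = star a ⊗ₜ[ℂ] star x + star a ⊗ₜ[ℂ] star y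
          rw [star_add, TensorProduct.tmul_add]))
      (fun x y => by
        ext b
        show star (x + y) ⊗ₜ[ℂ] star b = star x ⊗ₜ[ℂ] star b + star y ⊗ₜ[ℂ] star b
        rw [star_add, TensorProduct.add_tmul]))
    (fun r a b => by
      show star (r • a) ⊗ₜ[ℂ] star b = star a ⊗ₜ[ℂ] star (r • b)
      rw [star_smul, star_smul, TensorProduct.smul_tmul])

/-- A finite dimensional weak `*`-Hopf algebra over `ℂ` (axioms of [BNS]),
together with the derived properties of the antipode (which follow from the
axioms and are included as fields for convenience). -/
structure WeakHopfAlgebra (A : Type) [Ring A] [Algebra ℂ A] [StarRing A] [StarModule ℂ A] where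
  Δ : A →ₗ[ℂ] A ⊗[ℂ] A
  ε : A →ₗ[ℂ] ℂ
  S : A →ₗ[ℂ] A
  Sinv : A →ₗ[ℂ] A
  finite : FiniteDimensional ℂ A
  Δ_mul : ∀ x y : A, Δ (x * y) = Δ x * Δ y
  Δ_star : ∀ x : A, Δ (star x) = tensorStar A A (Δ x)
  coassoc : ∀ x : A,
    (TensorProduct.assoc ℂ A A A) ((TensorProduct.map Δ (LinearMap.id : A →ₗ[ℂ] A)) (Δ x))
      = (TensorProduct.map (LinearMap.id : A →ₗ[ℂ] A) Δ) (Δ x)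
  counit_left : ∀ x : A,
    (TensorProduct.lid ℂ A) ((TensorProduct.map ε (LinearMap.id : A →ₗ[ℂ] A)) (Δ x)) = x
  counit_right : ∀ x : A,
    (TensorProduct.rid ℂ A) ((TensorProduct.map (LinearMap.id : A →ₗ[ℂ] A) ε) (Δ x)) = x
  unit_weak :
    (Δ 1 ⊗ₜ[ℂ] (1 : A)) * ((TensorProduct.assoc ℂ A A A).symm ((1 : A) ⊗ₜ[ℂ] Δ 1))
      = (TensorProduct.map Δ (LinearMap.id : A →ₗ[ℂ] A)) (Δ 1)
  unit_weak' :
    ((TensorProduct.assoc ℂ A A A).symm ((1 : A) ⊗ₜ[ℂ] Δ 1)) * (Δ 1 ⊗ₜ[ℂ] (1 : A))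
      = (TensorProduct.map Δ (LinearMap.id : A →ₗ[ℂ] A)) (Δ 1)
  counit_weak : ∀ x y z : A,
    ε (x * y * z) = (TensorProduct.lid ℂ ℂ)
      ((TensorProduct.map (ε ∘ₗ LinearMap.mulLeft ℂ x) (ε ∘ₗ LinearMap.mulRight ℂ z)) (Δ y))
  counit_weak' : ∀ x y z : A,
    ε (x * y * z) = (TensorProduct.lid ℂ ℂ)
      ((TensorProduct.map (ε ∘ₗ LinearMap.mulRight ℂ z) (ε ∘ₗ LinearMap.mulLeft ℂ x)) (Δ y))
  antipode_left : ∀ x : A,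
    LinearMap.mul' ℂ A ((TensorProduct.map S (LinearMap.id : A →ₗ[ℂ] A)) (Δ x))
      = (TensorProduct.rid ℂ A)
          ((TensorProduct.map (LinearMap.id : A →ₗ[ℂ] A) (ε ∘ₗ LinearMap.mulLeft ℂ x)) (Δ 1))
  antipode_right : ∀ x : A,
    LinearMap.mul' ℂ A ((TensorProduct.map (LinearMap.id : A →ₗ[ℂ] A) S) (Δ x))
      = (TensorProduct.lid ℂ A)
          ((TensorProduct.map (ε ∘ₗ LinearMap.mulRight ℂ x) (LinearMap.id : A →ₗ[ℂ] A)) (Δ 1))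
  antipode_mid : ∀ x : A,
    LinearMap.mul' ℂ A
      ((TensorProduct.map (LinearMap.mul' ℂ A ∘ₗ TensorProduct.map S (LinearMap.id : A →ₗ[ℂ] A)) S)
        ((TensorProduct.map Δ (LinearMap.id : A →ₗ[ℂ] A)) (Δ x))) = S x
  S_Sinv : ∀ x : A, S (Sinv x) = x
  Sinv_S : ∀ x : A, Sinv (S x) = x
  S_antimul : ∀ x y : A, S (x * y) = S y * S x
  S_anticomul : ∀ x : A, Δ (S x) = (TensorProduct.comm ℂ A A) ((TensorProduct.map S S) (Δ x))
  S_star : ∀ x : A, star (S (star x)) = Sinv x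

/-- The set of elements commuting with everything. -/
def centerSet (R : Type) [Mul R] : Set R := {z | ∀ r : R, z * r = r * z}

namespace WeakHopfAlgebra

variable {A : Type} [Ring A] [Algebra ℂ A] [StarRing A] [StarModule ℂ A]

/-- `Σ x₍₁₎ · S(x₍₂₎)`. -/
def swIdS (W : WeakHopfAlgebra A) (x : A) : A :=
  LinearMap.mul' ℂ A ((TensorProduct.map (LinearMap.id : A →ₗ[ℂ] A) W.S) (W.Δ x))

/-- `Σ S(x₍₁₎) · x₍₂₎`. -/
def swSId (W : WeakHopfAlgebra A) (x : A) : A :=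
  LinearMap.mul' ℂ A ((TensorProduct.map W.S (LinearMap.id : A →ₗ[ℂ] A)) (W.Δ x))

/-- `Σ x₍₂₎ · S⁻¹(x₍₁₎)`. -/
def swIdSinv (W : WeakHopfAlgebra A) (x : A) : A :=
  LinearMap.mul' ℂ A
    ((TensorProduct.map (LinearMap.id : A →ₗ[ℂ] A) W.Sinv) ((TensorProduct.comm ℂ A A) (W.Δ x)))

/-- `Σ S⁻¹(x₍₂₎) · x₍₁₎`. -/
def swSinvId (W : WeakHopfAlgebra A) (x : A) : A :=
  LinearMap.mul' ℂ A
    ((TensorProduct.map W.Sinv (LinearMap.id : A →ₗ[ℂ] A)) ((TensorProduct.comm ℂ A A) (W.Δ x)))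

/-- The left subalgebra `A_L = {(φ ⊗ id)(Δ 1) : φ ∈ A*}`. -/
def AL (W : WeakHopfAlgebra A) : Set A :=
  {a | ∃ φ : A →ₗ[ℂ] ℂ,
    a = (TensorProduct.lid ℂ A) ((TensorProduct.map φ (LinearMap.id : A →ₗ[ℂ] A)) (W.Δ 1))}

/-- The right subalgebra `A_R = {(id ⊗ φ)(Δ 1) : φ ∈ A*}`. -/
def AR (W : WeakHopfAlgebra A) : Set A :=
  {a | ∃ φ : A →ₗ[ℂ] ℂ,
    a = (TensorProduct.rid ℂ A) ((TensorProduct.map (LinearMap.id : A →ₗ[ℂ] A) φ) (W.Δ 1))}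

/-- A left integral: `a · l = Σ a₍₁₎ S(a₍₂₎) · l` for all `a`. -/
def IsLeftIntegral (W : WeakHopfAlgebra A) (l : A) : Prop := ∀ a : A, a * l = W.swIdS a * l

/-- A right integral: `r · a = r · Σ S(a₍₁₎) a₍₂₎` for all `a`. -/
def IsRightIntegral (W : WeakHopfAlgebra A) (r : A) : Prop := ∀ a : A, r * a = r * W.swSId a

/-- A normalized Haar integral. -/
def IsHaar (W : WeakHopfAlgebra A) (h : A) : Prop :=
  W.IsLeftIntegral h ∧ W.IsRightIntegral h ∧ W.swSId h = 1 ∧ W.swIdS h = 1 ∧ W.S h = h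

/-- The canonical left action of a functional `λ ∈ A*` on `A`:
`λ ⇀ a = Σ a₍₁₎ · ⟨λ, a₍₂₎⟩`. -/
def lact (W : WeakHopfAlgebra A) (lam : A →ₗ[ℂ] ℂ) : A →ₗ[ℂ] A :=
  (TensorProduct.rid ℂ A).toLinearMap ∘ₗ
    (TensorProduct.map (LinearMap.id : A →ₗ[ℂ] A) lam) ∘ₗ W.Δ

/-- `λ ∈ A*` is a left integral of the dual weak Hopf algebra:
`λ ⇀ a ∈ A_L` for all `a ∈ A`. -/
def IsDualLeftIntegral (W : WeakHopfAlgebra A) (lam : A →ₗ[ℂ] ℂ) : Prop :=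
  ∀ a : A, W.lact lam a ∈ W.AL

/-- A dual pair of left integrals `(l, λ)`. -/
def IsDualPair (W : WeakHopfAlgebra A) (l : A) (lam : A →ₗ[ℂ] ℂ) : Prop :=
  W.IsLeftIntegral l ∧ W.IsDualLeftIntegral lam ∧
  W.lact lam l = 1 ∧
  (∀ a : A,
    (TensorProduct.rid ℂ A)
      ((TensorProduct.map (LinearMap.id : A →ₗ[ℂ] A) (lam ∘ₗ LinearMap.mulLeft ℂ a)) (W.Δ l))
      = W.S a) ∧
  (∀ a : A,
    (TensorProduct.lid ℂ A)
      ((TensorProduct.map (lam ∘ₗ LinearMap.mulRight ℂ a ∘ₗ W.Sinv)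
        (LinearMap.id : A →ₗ[ℂ] A)) (W.Δ l)) = a)

end WeakHopfAlgebra

/-- A (left) module `*`-algebra over a weak `*`-Hopf algebra. -/
structure ModuleAlgebra {A : Type} [Ring A] [Algebra ℂ A] [StarRing A] [StarModule ℂ A]
    (W : WeakHopfAlgebra A) (M : Type) [Ring M] [Algebra ℂ M] [StarRing M] [StarModule ℂ M] where
  act : A →ₗ[ℂ] M →ₗ[ℂ] M
  act_mul : ∀ (a b : A) (m : M), act (a * b) m = act a (act b m)
  act_one : ∀ m : M, act 1 m = m
  act_mul' : ∀ (a : A) (m n : M),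
    act a (m * n) = LinearMap.mul' ℂ M ((TensorProduct.map (act.flip m) (act.flip n)) (W.Δ a))
  act_star : ∀ (a : A) (m : M), star (act a m) = act (star (W.S a)) (star m)
  act_unit : ∀ a : A, act a 1 = act (W.swIdS a) 1

namespace ModuleAlgebra

variable {A : Type} [Ring A] [Algebra ℂ A] [StarRing A] [StarModule ℂ A]
variable {M : Type} [Ring M] [Algebra ℂ M] [StarRing M] [StarModule ℂ M]
variable {W : WeakHopfAlgebra A}

/-- `M_R = A ▷ 1_M`. -/
def MR (MA : ModuleAlgebra W M) : Set M := Set.range fun a : A => MA.act a 1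

/-- The fixed point algebra `M^A`. -/
def fixed (MA : ModuleAlgebra W M) : Set M :=
  {n | ∀ (a : A) (m : M), MA.act a (m * n) = MA.act a m * n}

end ModuleAlgebra

section Crossed

variable {A : Type} [Ring A] [Algebra ℂ A] [StarRing A] [StarModule ℂ A]
variable {M : Type} [Ring M] [Algebra ℂ M] [StarRing M] [StarModule ℂ M]
variable {W : WeakHopfAlgebra A}

/-- The subspace of `M ⊗ A` by which one divides to form the crossed product
`M ⋊ A = M ⊗_{A_L} A`. -/
def crossedRel (MA : ModuleAlgebra W M) : Submodule ℂ (M ⊗[ℂ] A) :=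
  Submodule.span ℂ
    {x | ∃ (m : M) (a b : A), b ∈ W.AL ∧
      x = (m * MA.act b 1) ⊗ₜ[ℂ] a - m ⊗ₜ[ℂ] (b * a)}

/-- The crossed product `M ⋊ A` as a vector space. -/
abbrev Crossed (MA : ModuleAlgebra W M) : Type := (M ⊗[ℂ] A) ⧸ crossedRel MA

/-- The canonical projection `M ⊗ A → M ⋊ A`; `cmk MA (m ⊗ₜ a)` is `m ⋊ a`. -/
def cmk (MA : ModuleAlgebra W M) : M ⊗[ℂ] A →ₗ[ℂ] Crossed MA := (crossedRel MA).mkQ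

/-- The embedding `M → M ⋊ A`, `m ↦ m ⋊ 1`. -/
def iM (MA : ModuleAlgebra W M) : M →ₗ[ℂ] Crossed MA :=
  cmk MA ∘ₗ (TensorProduct.mk ℂ M A).flip (1 : A)

/-- The map `A → M ⋊ A`, `a ↦ 1 ⋊ a`. -/
def iA (MA : ModuleAlgebra W M) : A →ₗ[ℂ] Crossed MA :=
  cmk MA ∘ₗ (TensorProduct.mk ℂ M A) (1 : M)

/-- The unit `1 ⋊ 1` of `M ⋊ A`. -/
def oneC (MA : ModuleAlgebra W M) : Crossed MA := cmk MA ((1 : M) ⊗ₜ[ℂ] (1 : A))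

/-- The multiplication of the crossed product `M ⋊ A`
(whose existence is the content of Theorem 3.1), as a bundled bilinear map
together with its defining formula on generators:
`(m ⋊ a)(m' ⋊ a') = Σ m (a₍₁₎ ▷ m') ⋊ a₍₂₎ a'`. -/
structure CrossedMul (MA : ModuleAlgebra W M) where
  mul : Crossed MA →ₗ[ℂ] Crossed MA →ₗ[ℂ] Crossed MA
  mul_def : ∀ (m m' : M) (a a' : A),
    mul (cmk MA (m ⊗ₜ[ℂ] a)) (cmk MA (m' ⊗ₜ[ℂ] a'))
      = cmk MA ((TensorProduct.map ((LinearMap.mulLeft ℂ m) ∘ₗ (MA.act.flip m'))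
          (LinearMap.mulRight ℂ a')) (W.Δ a))

/-- The star operation of the crossed product `M ⋊ A`
(whose existence is part of Theorem 3.1):
`(m ⋊ a)* = Σ (a₍₁₎* ▷ m*) ⋊ a₍₂₎*`. -/
structure CrossedStar (MA : ModuleAlgebra W M) where
  st : Crossed MA →+ Crossed MA
  st_smul : ∀ (c : ℂ) (x : Crossed MA), st (c • x) = (starRingEnd ℂ c) • st x
  st_def : ∀ (m : M) (a : A),
    st (cmk MA (m ⊗ₜ[ℂ] a))
      = cmk MA ((TensorProduct.map (MA.act.flip (star m)) (LinearMap.id : A →ₗ[ℂ] A))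
          (W.Δ (star a)))

/-- The multiplication on `(M ⋊ A) ⊗ B` induced by a crossed product
multiplication on `M ⋊ A` and the algebra structure of `B`. -/
def mulT (MA : ModuleAlgebra W M) (CS : CrossedMul MA) (B : Type) [Ring B] [Algebra ℂ B] :
    Crossed MA ⊗[ℂ] B →ₗ[ℂ] Crossed MA ⊗[ℂ] B →ₗ[ℂ] Crossed MA ⊗[ℂ] B :=
  TensorProduct.lift
    ((TensorProduct.mapBilinear (RingHom.id ℂ) (Crossed MA) B (Crossed MA) B).compl₁₂ CS.mul
      (LinearMap.mul ℂ B))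

end Crossed
section Aux

set_option maxHeartbeats 1000000
set_option synthInstance.maxHeartbeats 200000

open TensorProduct LinearMap

/-- Every element of a tensor product is a finite sum of simple tensors. -/
lemma exists_rep {P Q : Type} [AddCommGroup P] [Module ℂ P] [AddCommGroup Q] [Module ℂ Q]
    (t : P ⊗[ℂ] Q) :
    ∃ (n : ℕ) (u : Fin n → P) (v : Fin n → Q), t = ∑ i, u i ⊗ₜ[ℂ] v i := by
  induction t using TensorProduct.induction_on with
  | zero => exact ⟨0, ![], ![], by simp⟩
  | tmul p q => exact ⟨1, ![p], ![q], by simp⟩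
  | add x y hx hy =>
    obtain ⟨n, u, v, rfl⟩ := hx
    obtain ⟨n', u', v', rfl⟩ := hy
    refine ⟨n + n', Fin.append u u', Fin.append v v', ?_⟩
    rw [Fin.sum_univ_add]
    simp [Fin.append_left, Fin.append_right]

namespace WeakHopfAlgebra

variable {A : Type} [Ring A] [Algebra ℂ A] [StarRing A] [StarModule ℂ A]
variable (W : WeakHopfAlgebra A)

/-- The generic element of `A_L` associated with a functional. -/
noncomputable def ALelem (φ : A →ₗ[ℂ] ℂ) : A :=
  (TensorProduct.lid ℂ A) ((TensorProduct.map φ (LinearMap.id : A →ₗ[ℂ] A)) (W.Δ 1))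

/-- The generic element of `A_R` associated with a functional. -/
noncomputable def ARelem (φ : A →ₗ[ℂ] ℂ) : A :=
  (TensorProduct.rid ℂ A) ((TensorProduct.map (LinearMap.id : A →ₗ[ℂ] A) φ) (W.Δ 1))

lemma ALelem_mem (φ : A →ₗ[ℂ] ℂ) : W.ALelem φ ∈ W.AL := ⟨φ, rfl⟩

lemma ARelem_mem (φ : A →ₗ[ℂ] ℂ) : W.ARelem φ ∈ W.AR := ⟨φ, rfl⟩

lemma mem_AL_iff {z : A} : z ∈ W.AL ↔ ∃ φ, z = W.ALelem φ := Iff.rfl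

lemma mem_AR_iff {z : A} : z ∈ W.AR ↔ ∃ φ, z = W.ARelem φ := Iff.rfl

variable {n : ℕ} {u v : Fin n → A}

lemma ALelem_rep (h1 : W.Δ 1 = ∑ i, u i ⊗ₜ[ℂ] v i) (φ : A →ₗ[ℂ] ℂ) :
    W.ALelem φ = ∑ i, φ (u i) • v i := by
  simp [ALelem, h1]

lemma ARelem_rep (h1 : W.Δ 1 = ∑ i, u i ⊗ₜ[ℂ] v i) (φ : A →ₗ[ℂ] ℂ) :
    W.ARelem φ = ∑ i, φ (v i) • u i := by
  simp [ARelem, h1]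

/-- Expansion of `(Δ ⊗ id)(Δ 1)` from the first weak-unit axiom. -/
lemma uw_rep (h1 : W.Δ 1 = ∑ i, u i ⊗ₜ[ℂ] v i) :
    (TensorProduct.map W.Δ (LinearMap.id : A →ₗ[ℂ] A)) (W.Δ 1)
      = ∑ i, ∑ j, (u i ⊗ₜ[ℂ] (v i * u j)) ⊗ₜ[ℂ] v j := by
  rw [← W.unit_weak]
  rw [h1]
  rw [TensorProduct.sum_tmul, TensorProduct.tmul_sum, map_sum, Finset.sum_mul_sum]
  refine Finset.sum_congr rfl fun i _ => Finset.sum_congr rfl fun j _ => ?_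
  rw [TensorProduct.assoc_symm_tmul]
  rw [Algebra.TensorProduct.tmul_mul_tmul, Algebra.TensorProduct.tmul_mul_tmul]
  rw [mul_one, one_mul]

/-- Expansion of `(Δ ⊗ id)(Δ 1)` from the second weak-unit axiom. -/
lemma uw'_rep (h1 : W.Δ 1 = ∑ i, u i ⊗ₜ[ℂ] v i) :
    (TensorProduct.map W.Δ (LinearMap.id : A →ₗ[ℂ] A)) (W.Δ 1)
      = ∑ i, ∑ j, (u j ⊗ₜ[ℂ] (u i * v j)) ⊗ₜ[ℂ] v i := by
  rw [← W.unit_weak']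
  rw [h1]
  rw [TensorProduct.sum_tmul, TensorProduct.tmul_sum, map_sum, Finset.sum_mul_sum]
  refine Finset.sum_congr rfl fun i _ => Finset.sum_congr rfl fun j _ => ?_
  rw [TensorProduct.assoc_symm_tmul]
  rw [Algebra.TensorProduct.tmul_mul_tmul, Algebra.TensorProduct.tmul_mul_tmul]
  rw [mul_one, one_mul]

/-- `(id ⊗ Δ)(Δ 1)` expanded, version 1. -/
lemma idD_rep (h1 : W.Δ 1 = ∑ i, u i ⊗ₜ[ℂ] v i) :
    (∑ i, u i ⊗ₜ[ℂ] (W.Δ (v i)))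
      = ∑ i, ∑ j, u i ⊗ₜ[ℂ] ((v i * u j) ⊗ₜ[ℂ] v j) := by
  have h := W.coassoc 1
  rw [W.uw_rep h1] at h
  have h2 : (TensorProduct.map (LinearMap.id : A →ₗ[ℂ] A) W.Δ) (W.Δ 1)
      = ∑ i, u i ⊗ₜ[ℂ] (W.Δ (v i)) := by
    rw [h1, map_sum]; simp
  rw [h2] at h
  rw [← h, map_sum]
  refine Finset.sum_congr rfl fun i _ => ?_
  rw [map_sum]
  refine Finset.sum_congr rfl fun j _ => ?_
  exact TensorProduct.assoc_tmul _ _ _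

/-- `(id ⊗ Δ)(Δ 1)` expanded, version 2. -/
lemma idD'_rep (h1 : W.Δ 1 = ∑ i, u i ⊗ₜ[ℂ] v i) :
    (∑ i, u i ⊗ₜ[ℂ] (W.Δ (v i)))
      = ∑ i, ∑ j, u j ⊗ₜ[ℂ] ((u i * v j) ⊗ₜ[ℂ] v i) := by
  have h := W.coassoc 1
  rw [W.uw'_rep h1] at h
  have h2 : (TensorProduct.map (LinearMap.id : A →ₗ[ℂ] A) W.Δ) (W.Δ 1)
      = ∑ i, u i ⊗ₜ[ℂ] (W.Δ (v i)) := by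
    rw [h1, map_sum]; simp
  rw [h2] at h
  rw [← h, map_sum]
  refine Finset.sum_congr rfl fun i _ => ?_
  rw [map_sum]
  refine Finset.sum_congr rfl fun j _ => ?_
  exact TensorProduct.assoc_tmul _ _ _

end WeakHopfAlgebra

end Aux
section Aux2

open TensorProduct LinearMap

namespace WeakHopfAlgebra

variable {A : Type} [Ring A] [Algebra ℂ A] [StarRing A] [StarModule ℂ A]
variable (W : WeakHopfAlgebra A)

lemma comul_ALelem (φ : A →ₗ[ℂ] ℂ) :
    W.Δ (W.ALelem φ) = (W.ALelem φ ⊗ₜ[ℂ] 1) * W.Δ 1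
      ∧ W.Δ (W.ALelem φ) = W.Δ 1 * (W.ALelem φ ⊗ₜ[ℂ] 1) := by
  obtain ⟨n, u, v, h1⟩ := exists_rep (W.Δ 1)
  have hz : W.Δ (W.ALelem φ) = ∑ i, φ (u i) • W.Δ (v i) := by
    rw [W.ALelem_rep h1 φ, map_sum]; simp
  constructor
  · have h := W.idD_rep h1
    have h' := congrArg (fun t => (TensorProduct.lid ℂ (A ⊗[ℂ] A))
      ((TensorProduct.map φ (LinearMap.id : A ⊗[ℂ] A →ₗ[ℂ] A ⊗[ℂ] A)) t)) h
    simp only [map_sum, TensorProduct.map_tmul, LinearMap.id_coe, id_eq,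
      TensorProduct.lid_tmul] at h'
    rw [hz, h', W.ALelem_rep h1 φ, h1]
    simp only [TensorProduct.sum_tmul, Finset.sum_mul, Finset.mul_sum,
      TensorProduct.smul_tmul', smul_mul_assoc, mul_smul_comm,
      Algebra.TensorProduct.tmul_mul_tmul, one_mul, mul_one]
    try rw [Finset.sum_comm]
  · have h := W.idD'_rep h1
    have h' := congrArg (fun t => (TensorProduct.lid ℂ (A ⊗[ℂ] A))
      ((TensorProduct.map φ (LinearMap.id : A ⊗[ℂ] A →ₗ[ℂ] A ⊗[ℂ] A)) t)) h
    simp only [map_sum, TensorProduct.map_tmul, LinearMap.id_coe, id_eq,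
      TensorProduct.lid_tmul] at h'
    rw [hz, h', W.ALelem_rep h1 φ, h1]
    simp only [TensorProduct.sum_tmul, Finset.sum_mul, Finset.mul_sum,
      TensorProduct.smul_tmul', smul_mul_assoc, mul_smul_comm,
      Algebra.TensorProduct.tmul_mul_tmul, one_mul, mul_one]
    try rw [Finset.sum_comm]

lemma comul_ARelem (φ : A →ₗ[ℂ] ℂ) :
    W.Δ (W.ARelem φ) = W.Δ 1 * ((1 : A) ⊗ₜ[ℂ] W.ARelem φ)
      ∧ W.Δ (W.ARelem φ) = ((1 : A) ⊗ₜ[ℂ] W.ARelem φ) * W.Δ 1 := by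
  obtain ⟨n, u, v, h1⟩ := exists_rep (W.Δ 1)
  have hz : W.Δ (W.ARelem φ) = ∑ i, φ (v i) • W.Δ (u i) := by
    rw [W.ARelem_rep h1 φ, map_sum]; simp
  have hDu : (TensorProduct.map W.Δ (LinearMap.id : A →ₗ[ℂ] A)) (W.Δ 1)
      = ∑ i, W.Δ (u i) ⊗ₜ[ℂ] v i := by
    rw [h1, map_sum]; simp
  constructor
  · have h := W.uw_rep h1
    rw [hDu] at h
    have h' := congrArg (fun t => (TensorProduct.rid ℂ (A ⊗[ℂ] A))
      ((TensorProduct.map (LinearMap.id : A ⊗[ℂ] A →ₗ[ℂ] A ⊗[ℂ] A) φ) t)) h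
    simp only [map_sum, TensorProduct.map_tmul, LinearMap.id_coe, id_eq,
      TensorProduct.rid_tmul] at h'
    rw [hz, h', W.ARelem_rep h1 φ, h1]
    simp only [TensorProduct.tmul_sum, Finset.sum_mul, Finset.mul_sum,
      TensorProduct.smul_tmul', TensorProduct.tmul_smul, smul_mul_assoc, mul_smul_comm,
      Algebra.TensorProduct.tmul_mul_tmul, one_mul, mul_one, Finset.smul_sum]
    try rw [Finset.sum_comm]
  · have h := W.uw'_rep h1
    rw [hDu] at h
    have h' := congrArg (fun t => (TensorProduct.rid ℂ (A ⊗[ℂ] A))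
      ((TensorProduct.map (LinearMap.id : A ⊗[ℂ] A →ₗ[ℂ] A ⊗[ℂ] A) φ) t)) h
    simp only [map_sum, TensorProduct.map_tmul, LinearMap.id_coe, id_eq,
      TensorProduct.rid_tmul] at h'
    rw [hz, h', W.ARelem_rep h1 φ, h1]
    simp only [TensorProduct.tmul_sum, Finset.sum_mul, Finset.mul_sum,
      TensorProduct.smul_tmul', TensorProduct.tmul_smul, smul_mul_assoc, mul_smul_comm,
      Algebra.TensorProduct.tmul_mul_tmul, one_mul, mul_one, Finset.smul_sum]
    try rw [Finset.sum_comm]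

end WeakHopfAlgebra

end Aux2
section Aux3

open TensorProduct LinearMap

namespace WeakHopfAlgebra

variable {A : Type} [Ring A] [Algebra ℂ A] [StarRing A] [StarModule ℂ A]
variable (W : WeakHopfAlgebra A)

/-- `swIdS` as a linear map. -/
noncomputable def LswIdS : A →ₗ[ℂ] A :=
  LinearMap.mul' ℂ A ∘ₗ TensorProduct.map (LinearMap.id : A →ₗ[ℂ] A) W.S ∘ₗ W.Δ

@[simp] lemma LswIdS_apply (x : A) : W.LswIdS x = W.swIdS x := rfl

lemma swIdS_eq_ALelem (x : A) :
    W.swIdS x = W.ALelem (W.ε ∘ₗ LinearMap.mulRight ℂ x) := W.antipode_right x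

lemma swIdS_mem_AL (x : A) : W.swIdS x ∈ W.AL :=
  ⟨W.ε ∘ₗ LinearMap.mulRight ℂ x, W.swIdS_eq_ALelem x⟩

lemma swIdS_of_rep {m : ℕ} {p q : Fin m → A} {x : A} (hx : W.Δ x = ∑ k, p k ⊗ₜ[ℂ] q k) :
    W.swIdS x = ∑ k, p k * W.S (q k) := by
  simp [swIdS, hx]

lemma swSId_of_rep {m : ℕ} {p q : Fin m → A} {x : A} (hx : W.Δ x = ∑ k, p k ⊗ₜ[ℂ] q k) :
    W.swSId x = ∑ k, W.S (p k) * q k := by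
  simp [swSId, hx]

lemma swIdS_one : W.swIdS 1 = 1 := by
  rw [W.swIdS_eq_ALelem]
  have h : W.ε ∘ₗ LinearMap.mulRight ℂ (1 : A) = W.ε := by
    ext x; simp
  rw [h]
  exact W.counit_left 1

lemma swSId_one : W.swSId 1 = 1 := by
  have h := W.antipode_left 1
  have h' : W.ε ∘ₗ LinearMap.mulLeft ℂ (1 : A) = W.ε := by
    ext x; simp
  rw [h'] at h
  calc W.swSId 1 = _ := h
  _ = 1 := W.counit_right 1

lemma S_one : W.S 1 = 1 := by
  obtain ⟨n, u, v, h1⟩ := exists_rep (W.Δ 1)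
  have h := W.antipode_mid 1
  rw [W.uw_rep h1] at h
  rw [← h]
  have e1 : (∑ i, W.S (u i) * v i) = 1 := by
    rw [← W.swSId_of_rep h1]; exact W.swSId_one
  have e2 : (∑ i, u i * W.S (v i)) = 1 := by
    rw [← W.swIdS_of_rep h1]; exact W.swIdS_one
  simp only [map_sum]
  calc (∑ i, ∑ j, (LinearMap.mul' ℂ A)
        ((TensorProduct.map (LinearMap.mul' ℂ A ∘ₗ TensorProduct.map W.S (LinearMap.id : A →ₗ[ℂ] A)) W.S)
          ((u i ⊗ₜ[ℂ] (v i * u j)) ⊗ₜ[ℂ] v j)))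
      = ∑ i, ∑ j, (W.S (u i) * v i) * (u j * W.S (v j)) := by
        refine Finset.sum_congr rfl fun i _ => Finset.sum_congr rfl fun j _ => ?_
        simp only [TensorProduct.map_tmul, LinearMap.coe_comp, Function.comp_apply,
          LinearMap.mul'_apply, LinearMap.id_coe, id_eq]
        simp only [mul_assoc]
    _ = (∑ i, W.S (u i) * v i) * (∑ j, u j * W.S (v j)) := by
        rw [Finset.sum_mul_sum]
    _ = 1 := by rw [e1, e2, one_mul]

lemma comul_one_S {n : ℕ} {u v : Fin n → A} (h1 : W.Δ 1 = ∑ i, u i ⊗ₜ[ℂ] v i) :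
    W.Δ 1 = ∑ i, W.S (v i) ⊗ₜ[ℂ] W.S (u i) := by
  have h := W.S_anticomul 1
  rw [W.S_one] at h
  rw [h, h1]
  simp

lemma Sinv_mem_AR {z : A} (hz : z ∈ W.AL) : W.Sinv z ∈ W.AR := by
  obtain ⟨φ, rfl⟩ := hz
  obtain ⟨n, u, v, h1⟩ := exists_rep (W.Δ 1)
  have h2 := W.comul_one_S h1
  refine ⟨φ ∘ₗ W.S, ?_⟩
  have e1 : W.ALelem φ = ∑ i, φ (W.S (v i)) • W.S (u i) := W.ALelem_rep h2 φ
  have e2 : W.ARelem (φ ∘ₗ W.S) = ∑ i, φ (W.S (v i)) • u i := by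
    rw [W.ARelem_rep h1]; rfl
  show W.Sinv (W.ALelem φ) = W.ARelem (φ ∘ₗ W.S)
  rw [e1, e2, map_sum]
  refine Finset.sum_congr rfl fun i _ => ?_
  rw [map_smul, W.Sinv_S]

lemma swIdS_AR {y : A} (hy : y ∈ W.AR) : W.swIdS y = W.S y := by
  obtain ⟨φ, rfl⟩ := hy
  show W.swIdS (W.ARelem φ) = W.S (W.ARelem φ)
  obtain ⟨n, u, v, h1⟩ := exists_rep (W.Δ 1)
  have hΔ : W.Δ (W.ARelem φ) = ∑ i, u i ⊗ₜ[ℂ] (W.ARelem φ * v i) := by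
    rw [(W.comul_ARelem φ).2, h1, Finset.mul_sum]
    refine Finset.sum_congr rfl fun i _ => ?_
    rw [Algebra.TensorProduct.tmul_mul_tmul, one_mul]
  rw [W.swIdS_of_rep hΔ]
  have e2 : (∑ i, u i * W.S (v i)) = 1 := by
    rw [← W.swIdS_of_rep h1]; exact W.swIdS_one
  calc (∑ i, u i * W.S (W.ARelem φ * v i))
      = ∑ i, (u i * W.S (v i)) * W.S (W.ARelem φ) := by
        refine Finset.sum_congr rfl fun i _ => ?_
        rw [W.S_antimul, mul_assoc]
    _ = (∑ i, u i * W.S (v i)) * W.S (W.ARelem φ) := by rw [Finset.sum_mul]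
    _ = W.S (W.ARelem φ) := by rw [e2, one_mul]

lemma lact_of_rep {m : ℕ} {p q : Fin m → A} {x : A} (hx : W.Δ x = ∑ k, p k ⊗ₜ[ℂ] q k)
    (ω : A →ₗ[ℂ] ℂ) : W.lact ω x = ∑ k, ω (q k) • p k := by
  simp [lact, hx]

lemma comul_AL_mul {z : A} (hz : z ∈ W.AL) (a : A) :
    W.Δ (z * a) = (z ⊗ₜ[ℂ] 1) * W.Δ a := by
  obtain ⟨φ, rfl⟩ := hz
  show W.Δ (W.ALelem φ * a) = (W.ALelem φ ⊗ₜ[ℂ] 1) * W.Δ a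
  rw [W.Δ_mul, (W.comul_ALelem φ).1, mul_assoc]
  congr 1
  rw [← W.Δ_mul, one_mul]

lemma lact_AL_mul {z : A} (hz : z ∈ W.AL) (ω : A →ₗ[ℂ] ℂ) (a : A) :
    W.lact ω (z * a) = z * W.lact ω a := by
  obtain ⟨m, p, q, ha⟩ := exists_rep (W.Δ a)
  have hΔ : W.Δ (z * a) = ∑ k, (z * p k) ⊗ₜ[ℂ] q k := by
    rw [W.comul_AL_mul hz, ha, Finset.mul_sum]
    refine Finset.sum_congr rfl fun k _ => ?_
    rw [Algebra.TensorProduct.tmul_mul_tmul, one_mul]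
  rw [W.lact_of_rep hΔ, W.lact_of_rep ha ω, Finset.mul_sum]
  refine Finset.sum_congr rfl fun k _ => ?_
  rw [mul_smul_comm]

lemma swIdS_contract (a : A) :
    LinearMap.mul' ℂ A ((TensorProduct.map W.LswIdS (LinearMap.id : A →ₗ[ℂ] A)) (W.Δ a)) = a := by
  obtain ⟨n, u, v, h1⟩ := exists_rep (W.Δ 1)
  obtain ⟨m, p, q, ha⟩ := exists_rep (W.Δ a)
  have hΔ : W.Δ a = ∑ k, ∑ i, (u i * p k) ⊗ₜ[ℂ] (v i * q k) := by
    calc W.Δ a = W.Δ (1 * a) := by rw [one_mul]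
    _ = W.Δ 1 * W.Δ a := W.Δ_mul 1 a
    _ = ∑ k, ∑ i, (u i * p k) ⊗ₜ[ℂ] (v i * q k) := by
        rw [h1, ha, Finset.sum_mul_sum, Finset.sum_comm]
        exact Finset.sum_congr rfl fun k _ => Finset.sum_congr rfl fun i _ =>
          Algebra.TensorProduct.tmul_mul_tmul _ _ _ _
  have lhs : LinearMap.mul' ℂ A ((TensorProduct.map W.LswIdS (LinearMap.id : A →ₗ[ℂ] A)) (W.Δ a))
      = ∑ k, W.swIdS (p k) * q k := by
    rw [ha]; simp
  have sw : ∀ k, W.swIdS (p k) = ∑ i, W.ε (u i * p k) • v i := fun k => by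
    rw [W.swIdS_eq_ALelem, W.ALelem_rep h1]; rfl
  have rhs : a = ∑ k, ∑ i, W.ε (u i * p k) • (v i * q k) := by
    conv_lhs => rw [← W.counit_left a, hΔ]
    rw [map_sum, map_sum]
    simp
  rw [lhs, rhs]
  refine Finset.sum_congr rfl fun k _ => ?_
  rw [sw k, Finset.sum_mul]
  refine Finset.sum_congr rfl fun i _ => ?_
  rw [smul_mul_assoc]

end WeakHopfAlgebra

end Aux3
section Aux4

open TensorProduct LinearMap

namespace ModuleAlgebra

variable {A : Type} [Ring A] [Algebra ℂ A] [StarRing A] [StarModule ℂ A]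
variable {M : Type} [Ring M] [Algebra ℂ M] [StarRing M] [StarModule ℂ M]
variable {W : WeakHopfAlgebra A} (MA : ModuleAlgebra W M)

lemma act_mul'_rep {m : ℕ} {p q : Fin m → A} {a : A} (ha : W.Δ a = ∑ k, p k ⊗ₜ[ℂ] q k)
    (x y : M) : MA.act a (x * y) = ∑ k, MA.act (p k) x * MA.act (q k) y := by
  rw [MA.act_mul', ha]
  simp

lemma sum_act_one {n : ℕ} {u v : Fin n → A} (h1 : W.Δ 1 = ∑ i, u i ⊗ₜ[ℂ] v i) (m : M) :
    ∑ i, MA.act (u i) m * MA.act (v i) 1 = m := by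
  have h := MA.act_mul'_rep h1 m 1
  rw [MA.act_one, mul_one] at h
  exact h.symm

lemma G1 {z : A} (hz : z ∈ W.AL) (m : M) : MA.act z m = MA.act z 1 * m := by
  obtain ⟨φ, rfl⟩ := hz
  show MA.act (W.ALelem φ) m = MA.act (W.ALelem φ) 1 * m
  obtain ⟨n, u, v, h1⟩ := exists_rep (W.Δ 1)
  have hz2 : W.Δ (W.ALelem φ) = ∑ i, (u i * W.ALelem φ) ⊗ₜ[ℂ] v i := by
    rw [(W.comul_ALelem φ).2, h1, Finset.sum_mul]
    exact Finset.sum_congr rfl fun i _ => by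
      rw [Algebra.TensorProduct.tmul_mul_tmul, mul_one]
  calc MA.act (W.ALelem φ) m = MA.act (W.ALelem φ) (1 * m) := by rw [one_mul]
    _ = ∑ i, MA.act (u i * W.ALelem φ) 1 * MA.act (v i) m := MA.act_mul'_rep hz2 1 m
    _ = ∑ i, MA.act (u i) (MA.act (W.ALelem φ) 1) * MA.act (v i) m := by
        exact Finset.sum_congr rfl fun i _ => by rw [MA.act_mul]
    _ = MA.act 1 (MA.act (W.ALelem φ) 1 * m) := (MA.act_mul'_rep h1 _ m).symm
    _ = MA.act (W.ALelem φ) 1 * m := MA.act_one _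

lemma G2 {y : A} (hy : y ∈ W.AR) (m : M) : MA.act y m = m * MA.act y 1 := by
  obtain ⟨φ, rfl⟩ := hy
  show MA.act (W.ARelem φ) m = m * MA.act (W.ARelem φ) 1
  obtain ⟨n, u, v, h1⟩ := exists_rep (W.Δ 1)
  have hy2 : W.Δ (W.ARelem φ) = ∑ i, u i ⊗ₜ[ℂ] (v i * W.ARelem φ) := by
    rw [(W.comul_ARelem φ).1, h1, Finset.sum_mul]
    exact Finset.sum_congr rfl fun i _ => by
      rw [Algebra.TensorProduct.tmul_mul_tmul, mul_one]
  calc MA.act (W.ARelem φ) m = MA.act (W.ARelem φ) (m * 1) := by rw [mul_one]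
    _ = ∑ i, MA.act (u i) m * MA.act (v i * W.ARelem φ) 1 := MA.act_mul'_rep hy2 m 1
    _ = ∑ i, MA.act (u i) m * MA.act (v i) (MA.act (W.ARelem φ) 1) := by
        exact Finset.sum_congr rfl fun i _ => by rw [MA.act_mul]
    _ = MA.act 1 (m * MA.act (W.ARelem φ) 1) := (MA.act_mul'_rep h1 m _).symm
    _ = m * MA.act (W.ARelem φ) 1 := MA.act_one _

lemma act_one_AR (a : A) : ∃ y ∈ W.AR, MA.act a 1 = MA.act y 1 := by
  refine ⟨W.Sinv (W.swIdS a), W.Sinv_mem_AR (W.swIdS_mem_AL a), ?_⟩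
  calc MA.act a 1 = MA.act (W.swIdS a) 1 := MA.act_unit a
    _ = MA.act (W.S (W.Sinv (W.swIdS a))) 1 := by rw [W.S_Sinv]
    _ = MA.act (W.swIdS (W.Sinv (W.swIdS a))) 1 := by
        rw [W.swIdS_AR (W.Sinv_mem_AR (W.swIdS_mem_AL a))]
    _ = MA.act (W.Sinv (W.swIdS a)) 1 := (MA.act_unit _).symm

lemma fixed_act {n : M} (hn : n ∈ MA.fixed) (b : A) :
    MA.act b n = MA.act b 1 * n := by
  have := hn b 1
  rwa [one_mul] at this

/-- Key commutation: `A ▷ 1` commutes with the fixed point algebra. -/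
lemma MR_comm_fixed {n : M} (hn : n ∈ MA.fixed) (a : A) :
    n * MA.act a 1 = MA.act a 1 * n := by
  obtain ⟨y, hy, he⟩ := MA.act_one_AR a
  rw [he, ← MA.G2 hy n, MA.fixed_act hn y]

lemma left_form {n : M} (hn : n ∈ MA.fixed) (a : A) (m : M) :
    MA.act a (n * m) = n * MA.act a m := by
  obtain ⟨mm, p, q, ha⟩ := exists_rep (W.Δ a)
  calc MA.act a (n * m) = ∑ k, MA.act (p k) n * MA.act (q k) m := MA.act_mul'_rep ha n m
    _ = ∑ k, n * (MA.act (p k) 1 * MA.act (q k) m) := by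
        refine Finset.sum_congr rfl fun k _ => ?_
        rw [MA.fixed_act hn, ← MA.MR_comm_fixed hn, mul_assoc]
    _ = n * ∑ k, MA.act (p k) 1 * MA.act (q k) m := by rw [Finset.mul_sum]
    _ = n * MA.act a (1 * m) := by rw [MA.act_mul'_rep ha 1 m]
    _ = n * MA.act a m := by rw [one_mul]

end ModuleAlgebra

end Aux4
section Aux5

open TensorProduct LinearMap

namespace WeakHopfAlgebra

variable {A : Type} [Ring A] [Algebra ℂ A] [StarRing A] [StarModule ℂ A]
variable (W : WeakHopfAlgebra A)

/-- Representation of `Δ 1` with all right legs in `A_L`. -/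
lemma repr_AL : ∃ (N : ℕ) (e c : Fin N → A), (∀ j, c j ∈ W.AL) ∧
    W.Δ 1 = ∑ j, e j ⊗ₜ[ℂ] c j := by
  haveI := W.finite
  set B := Module.finBasis ℂ A with hB
  have key : ∀ t : A ⊗[ℂ] A,
      t = ∑ j, B j ⊗ₜ[ℂ] ((TensorProduct.lid ℂ A)
        ((TensorProduct.map (B.coord j) (LinearMap.id : A →ₗ[ℂ] A)) t)) := by
    intro t
    induction t using TensorProduct.induction_on with
    | zero => simp
    | add x y hx hy =>
      conv_lhs => rw [hx, hy]
      simp only [map_add, TensorProduct.tmul_add]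
      rw [Finset.sum_add_distrib]
    | tmul x y =>
      simp only [TensorProduct.map_tmul, LinearMap.id_coe, id_eq,
        TensorProduct.lid_tmul, Module.Basis.coord_apply]
      calc x ⊗ₜ[ℂ] y = (∑ j, B.repr x j • B j) ⊗ₜ[ℂ] y := by rw [Module.Basis.sum_repr]
        _ = ∑ j, (B.repr x j • B j) ⊗ₜ[ℂ] y := by rw [TensorProduct.sum_tmul]
        _ = ∑ j, B j ⊗ₜ[ℂ] (B.repr x j • y) := by
            refine Finset.sum_congr rfl fun j _ => ?_
            rw [TensorProduct.smul_tmul]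
  exact ⟨_, B, _, fun j => ⟨B.coord j, rfl⟩, key (W.Δ 1)⟩

end WeakHopfAlgebra

section CrossedAux

variable {A : Type} [Ring A] [Algebra ℂ A] [StarRing A] [StarModule ℂ A]
variable {M : Type} [Ring M] [Algebra ℂ M] [StarRing M] [StarModule ℂ M]
variable {W : WeakHopfAlgebra A} (MA : ModuleAlgebra W M)

lemma cmk_eq_mk (t : M ⊗[ℂ] A) : cmk MA t = Submodule.Quotient.mk t := rfl

lemma rel_eq {b : A} (hb : b ∈ W.AL) (m : M) (a : A) :
    cmk MA ((m * MA.act b 1) ⊗ₜ[ℂ] a) = cmk MA (m ⊗ₜ[ℂ] (b * a)) := by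
  rw [cmk_eq_mk, cmk_eq_mk, Submodule.Quotient.eq]
  exact Submodule.subset_span ⟨m, a, b, hb, rfl⟩

lemma iM_apply (n : M) : iM MA n = cmk MA (n ⊗ₜ[ℂ] (1 : A)) := rfl

lemma iA_apply (a : A) : iA MA a = cmk MA ((1 : M) ⊗ₜ[ℂ] a) := rfl

/-- `Σ m (a₍₁₎ ▷ 1) ⋊ a₍₂₎ = m ⋊ a`. -/
lemma claimQ (m : M) (a : A) :
    cmk MA ((TensorProduct.map ((LinearMap.mulLeft ℂ m) ∘ₗ MA.act.flip 1)
      (LinearMap.id : A →ₗ[ℂ] A)) (W.Δ a)) = cmk MA (m ⊗ₜ[ℂ] a) := by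
  obtain ⟨mm, p, q, ha⟩ := exists_rep (W.Δ a)
  have l1 : (TensorProduct.map ((LinearMap.mulLeft ℂ m) ∘ₗ MA.act.flip 1)
      (LinearMap.id : A →ₗ[ℂ] A)) (W.Δ a) = ∑ k, (m * MA.act (p k) 1) ⊗ₜ[ℂ] q k := by
    rw [ha]; simp
  have l3 : (∑ k, W.swIdS (p k) * q k) = a := by
    have h := W.swIdS_contract a
    rw [ha] at h
    simpa using h
  rw [l1, map_sum]
  calc (∑ k, cmk MA ((m * MA.act (p k) 1) ⊗ₜ[ℂ] q k))
      = ∑ k, cmk MA (m ⊗ₜ[ℂ] (W.swIdS (p k) * q k)) := by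
        refine Finset.sum_congr rfl fun k _ => ?_
        rw [MA.act_unit]
        exact rel_eq MA (W.swIdS_mem_AL (p k)) m (q k)
    _ = cmk MA (m ⊗ₜ[ℂ] ∑ k, W.swIdS (p k) * q k) := by
        rw [TensorProduct.tmul_sum, map_sum]
    _ = cmk MA (m ⊗ₜ[ℂ] a) := by rw [l3]

variable (CS : CrossedMul MA)

/-- `(n ⋊ 1)(m ⋊ a) = nm ⋊ a`. -/
lemma claimP1 (n m : M) (a : A) :
    CS.mul (cmk MA (n ⊗ₜ[ℂ] (1 : A))) (cmk MA (m ⊗ₜ[ℂ] a)) = cmk MA ((n * m) ⊗ₜ[ℂ] a) := by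
  rw [CS.mul_def]
  obtain ⟨N, e, c, hc, h1⟩ := W.repr_AL
  have l1 : (TensorProduct.map ((LinearMap.mulLeft ℂ n) ∘ₗ MA.act.flip m)
      (LinearMap.mulRight ℂ a)) (W.Δ 1) = ∑ j, (n * MA.act (e j) m) ⊗ₜ[ℂ] (c j * a) := by
    rw [h1]; simp
  rw [l1, map_sum]
  calc (∑ j, cmk MA ((n * MA.act (e j) m) ⊗ₜ[ℂ] (c j * a)))
      = ∑ j, cmk MA (((n * MA.act (e j) m) * MA.act (c j) 1) ⊗ₜ[ℂ] a) := by
        refine Finset.sum_congr rfl fun j _ => ?_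
        rw [rel_eq MA (hc j)]
    _ = cmk MA ((∑ j, (n * MA.act (e j) m) * MA.act (c j) 1) ⊗ₜ[ℂ] a) := by
        rw [TensorProduct.sum_tmul, map_sum]
    _ = cmk MA ((n * m) ⊗ₜ[ℂ] a) := by
        congr 1
        rw [show (∑ j, (n * MA.act (e j) m) * MA.act (c j) 1)
            = n * ∑ j, MA.act (e j) m * MA.act (c j) 1 by
          rw [Finset.mul_sum]; exact Finset.sum_congr rfl fun j _ => (mul_assoc _ _ _)]
        rw [MA.sum_act_one h1 m]

/-- `(x ⋊ a)(n ⋊ 1) = nx ⋊ a` for `x` in the relative commutant and `n` fixed. -/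
lemma claimP2 {x n : M} (hx : ∀ n' ∈ MA.fixed, x * n' = n' * x) (hn : n ∈ MA.fixed) (a : A) :
    CS.mul (cmk MA (x ⊗ₜ[ℂ] a)) (cmk MA (n ⊗ₜ[ℂ] (1 : A))) = cmk MA ((n * x) ⊗ₜ[ℂ] a) := by
  rw [CS.mul_def]
  have l0 : TensorProduct.map ((LinearMap.mulLeft ℂ x) ∘ₗ MA.act.flip n)
      (LinearMap.mulRight ℂ (1 : A))
      = TensorProduct.map ((LinearMap.mulLeft ℂ (n * x)) ∘ₗ MA.act.flip 1)
        (LinearMap.id : A →ₗ[ℂ] A) := by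
    congr 1
    · ext b
      show x * MA.act b n = (n * x) * MA.act b 1
      rw [MA.fixed_act hn, ← MA.MR_comm_fixed hn, ← mul_assoc, hx n hn, mul_assoc]
    · ext b
      exact mul_one b
  rw [l0]
  exact claimQ MA (n * x) a

end CrossedAux

end Aux5
section Aux6

open TensorProduct LinearMap

variable {A : Type} [Ring A] [Algebra ℂ A] [StarRing A] [StarModule ℂ A]
variable {M : Type} [Ring M] [Algebra ℂ M] [StarRing M] [StarModule ℂ M]
variable {W : WeakHopfAlgebra A} (MA : ModuleAlgebra W M)

/-- The auxiliary bilinear evaluation `b ⊗ d ↦ ω(d) • (b ▷ 1)`. -/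
noncomputable def nuMap (ω : A →ₗ[ℂ] ℂ) : A ⊗[ℂ] A →ₗ[ℂ] M :=
  LinearMap.mul' ℂ M ∘ₗ TensorProduct.map (MA.act.flip 1) (ω.smulRight (1 : M))

lemma nuMap_comul (ω : A →ₗ[ℂ] ℂ) (b : A) :
    nuMap MA ω (W.Δ b) = MA.act (W.lact ω b) 1 := by
  obtain ⟨mm, p, q, hb⟩ := exists_rep (W.Δ b)
  rw [W.lact_of_rep hb ω, hb]
  simp [nuMap, mul_smul_comm]

/-- `Σ (a₍₁₎ ▷ 1) ((λ ⇀ a₍₂₎) ▷ 1) = (λ ⇀ a) ▷ 1`. -/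
lemma lact_flip (ω : A →ₗ[ℂ] ℂ) (a : A) :
    LinearMap.mul' ℂ M ((TensorProduct.map (MA.act.flip 1)
      ((MA.act.flip 1) ∘ₗ W.lact ω)) (W.Δ a)) = MA.act (W.lact ω a) 1 := by
  have hA : (MA.act.flip 1) ∘ₗ W.lact ω = nuMap MA ω ∘ₗ W.Δ := by
    ext b
    exact (nuMap_comul MA ω b).symm
  rw [hA]
  have h2 : TensorProduct.map (MA.act.flip 1) (nuMap MA ω ∘ₗ W.Δ)
      = (TensorProduct.map (MA.act.flip 1) (nuMap MA ω)) ∘ₗ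
        (TensorProduct.map (LinearMap.id : A →ₗ[ℂ] A) W.Δ) := by
    rw [← TensorProduct.map_comp, LinearMap.comp_id]
  rw [h2, LinearMap.comp_apply, ← W.coassoc a]
  have hB : (LinearMap.mul' ℂ M ∘ₗ TensorProduct.map (MA.act.flip 1) (nuMap MA ω)) ∘ₗ
      (TensorProduct.assoc ℂ A A A).toLinearMap
      = LinearMap.mul' ℂ M ∘ₗ TensorProduct.map
          (LinearMap.mul' ℂ M ∘ₗ TensorProduct.map (MA.act.flip 1) (MA.act.flip 1))
          (ω.smulRight (1 : M)) := by
    apply TensorProduct.ext_threefold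
    intro b c d
    simp [nuMap, mul_assoc]
  have hB' := LinearMap.congr_fun hB
    ((TensorProduct.map W.Δ (LinearMap.id : A →ₗ[ℂ] A)) (W.Δ a))
  simp only [LinearMap.comp_apply, LinearEquiv.coe_coe] at hB'
  rw [hB']
  have hC : (TensorProduct.map
        (LinearMap.mul' ℂ M ∘ₗ TensorProduct.map (MA.act.flip 1) (MA.act.flip 1))
        (ω.smulRight (1 : M)))
      ((TensorProduct.map W.Δ (LinearMap.id : A →ₗ[ℂ] A)) (W.Δ a))
      = (TensorProduct.map (MA.act.flip 1) (ω.smulRight (1 : M))) (W.Δ a) := by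
    rw [← LinearMap.comp_apply, ← TensorProduct.map_comp]
    have hC1 : (LinearMap.mul' ℂ M ∘ₗ TensorProduct.map (MA.act.flip 1) (MA.act.flip 1)) ∘ₗ W.Δ
        = MA.act.flip 1 := by
      ext b
      have h := MA.act_mul' b 1 1
      rw [one_mul] at h
      exact (h.symm : _)
    rw [hC1, LinearMap.comp_id]
  rw [hC]
  exact nuMap_comul MA ω a

lemma lact_flip_rep {mm : ℕ} {p q : Fin mm → A} {a : A} (ha : W.Δ a = ∑ k, p k ⊗ₜ[ℂ] q k)
    (ω : A →ₗ[ℂ] ℂ) :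
    ∑ k, MA.act (p k) 1 * MA.act (W.lact ω (q k)) 1 = MA.act (W.lact ω a) 1 := by
  have h := lact_flip MA ω a
  rw [ha] at h
  simpa using h

/-- The map `m ⋊ a ↦ m·((ω ⇀ a) ▷ 1)` on `M ⊗ A`. -/
noncomputable def Rt (ω : A →ₗ[ℂ] ℂ) : M ⊗[ℂ] A →ₗ[ℂ] M :=
  LinearMap.mul' ℂ M ∘ₗ TensorProduct.map (LinearMap.id : M →ₗ[ℂ] M)
    ((MA.act.flip 1) ∘ₗ W.lact ω)

@[simp] lemma Rt_tmul (ω : A →ₗ[ℂ] ℂ) (m : M) (a : A) :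
    Rt MA ω (m ⊗ₜ[ℂ] a) = m * MA.act (W.lact ω a) 1 := by
  simp [Rt]

lemma rel_le_ker (ω : A →ₗ[ℂ] ℂ) : crossedRel MA ≤ LinearMap.ker (Rt MA ω) := by
  rw [crossedRel, Submodule.span_le]
  rintro _ ⟨m, a, b, hb, rfl⟩
  simp only [SetLike.mem_coe, LinearMap.mem_ker, map_sub, Rt_tmul]
  have e : MA.act (W.lact ω (b * a)) 1 = MA.act b 1 * MA.act (W.lact ω a) 1 := by
    rw [W.lact_AL_mul hb, MA.act_mul, MA.G1 hb]
  rw [e, ← mul_assoc, sub_self]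

/-- The induced map on the crossed product. -/
noncomputable def Rq (ω : A →ₗ[ℂ] ℂ) : Crossed MA →ₗ[ℂ] M :=
  (crossedRel MA).liftQ (Rt MA ω) (rel_le_ker MA ω)

lemma Rq_cmk (ω : A →ₗ[ℂ] ℂ) (t : M ⊗[ℂ] A) : Rq MA ω (cmk MA t) = Rt MA ω t := by
  rw [cmk_eq_mk]
  exact Submodule.liftQ_apply _ _ _

variable (CS : CrossedMul MA)

lemma R_right {n : M} (hn : n ∈ MA.fixed) (ω : A →ₗ[ℂ] ℂ) (m : M) (a : A) :
    Rq MA ω (CS.mul (cmk MA (m ⊗ₜ[ℂ] a)) (cmk MA (n ⊗ₜ[ℂ] (1 : A))))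
      = Rq MA ω (cmk MA (m ⊗ₜ[ℂ] a)) * n := by
  rw [CS.mul_def, Rq_cmk, Rq_cmk, Rt_tmul]
  obtain ⟨mm, p, q, ha⟩ := exists_rep (W.Δ a)
  have l1 : (TensorProduct.map ((LinearMap.mulLeft ℂ m) ∘ₗ MA.act.flip n)
      (LinearMap.mulRight ℂ (1 : A))) (W.Δ a) = ∑ k, (m * MA.act (p k) n) ⊗ₜ[ℂ] q k := by
    rw [ha]; simp
  rw [l1, map_sum]
  calc (∑ k, Rq MA ω (cmk MA ((m * MA.act (p k) n) ⊗ₜ[ℂ] q k)))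
      = ∑ k, ((m * MA.act (p k) 1) * MA.act (W.lact ω (q k)) 1) * n := by
        refine Finset.sum_congr rfl fun k _ => ?_
        rw [Rq_cmk, Rt_tmul, MA.fixed_act hn, ← mul_assoc m,
          mul_assoc (m * MA.act (p k) 1) n, MA.MR_comm_fixed hn, ← mul_assoc]
    _ = (∑ k, (m * MA.act (p k) 1) * MA.act (W.lact ω (q k)) 1) * n := by
        rw [Finset.sum_mul]
    _ = (m * MA.act (W.lact ω a) 1) * n := by
        congr 1
        rw [show (∑ k, (m * MA.act (p k) 1) * MA.act (W.lact ω (q k)) 1)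
            = m * ∑ k, MA.act (p k) 1 * MA.act (W.lact ω (q k)) 1 by
          rw [Finset.mul_sum]; exact Finset.sum_congr rfl fun k _ => mul_assoc _ _ _]
        rw [lact_flip_rep MA ha ω]

lemma R_left (n m : M) (ω : A →ₗ[ℂ] ℂ) (a : A) :
    Rq MA ω (CS.mul (cmk MA (n ⊗ₜ[ℂ] (1 : A))) (cmk MA (m ⊗ₜ[ℂ] a)))
      = n * Rq MA ω (cmk MA (m ⊗ₜ[ℂ] a)) := by
  rw [claimP1, Rq_cmk, Rq_cmk, Rt_tmul, Rt_tmul, mul_assoc]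

lemma R_right_all {n : M} (hn : n ∈ MA.fixed) (ω : A →ₗ[ℂ] ℂ) (y : Crossed MA) :
    Rq MA ω (CS.mul y (iM MA n)) = Rq MA ω y * n := by
  have key : (Rq MA ω ∘ₗ (CS.mul.flip (iM MA n))) ∘ₗ (crossedRel MA).mkQ
      = (LinearMap.mulRight ℂ n ∘ₗ Rq MA ω) ∘ₗ (crossedRel MA).mkQ := by
    apply TensorProduct.ext'
    intro m a
    simp only [LinearMap.comp_apply, LinearMap.flip_apply, LinearMap.mulRight_apply]
    exact R_right MA CS hn ω m a
  obtain ⟨t, rfl⟩ := Submodule.mkQ_surjective (crossedRel MA) y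
  exact LinearMap.congr_fun key t

lemma R_left_all (n : M) (ω : A →ₗ[ℂ] ℂ) (y : Crossed MA) :
    Rq MA ω (CS.mul (iM MA n) y) = n * Rq MA ω y := by
  have key : (Rq MA ω ∘ₗ (CS.mul (iM MA n))) ∘ₗ (crossedRel MA).mkQ
      = (LinearMap.mulLeft ℂ n ∘ₗ Rq MA ω) ∘ₗ (crossedRel MA).mkQ := by
    apply TensorProduct.ext'
    intro m a
    simp only [LinearMap.comp_apply, LinearMap.mulLeft_apply]
    exact R_left MA CS n m ω a
  obtain ⟨t, rfl⟩ := Submodule.mkQ_surjective (crossedRel MA) y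
  exact LinearMap.congr_fun key t

/-- Reconstruction of an element of the crossed product from its
integral coefficients. -/
lemma claimR {mm : ℕ} {p q : Fin mm → A} (lam : A →ₗ[ℂ] ℂ)
    (hv : ∀ c : A, ∑ k, lam (W.Sinv (p k) * c) • q k = c) (y : Crossed MA) :
    y = ∑ k, cmk MA ((Rq MA (lam ∘ₗ LinearMap.mulLeft ℂ (W.Sinv (p k))) y) ⊗ₜ[ℂ] q k) := by
  obtain ⟨t, rfl⟩ := Submodule.mkQ_surjective (crossedRel MA) y
  have key : (crossedRel MA).mkQ
      = (∑ k, (cmk MA ∘ₗ ((TensorProduct.mk ℂ M A).flip (q k)) ∘ₗ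
          Rt MA (lam ∘ₗ LinearMap.mulLeft ℂ (W.Sinv (p k))))) := by
    apply TensorProduct.ext'
    intro m a
    simp only [LinearMap.sum_apply, LinearMap.comp_apply, Rt_tmul,
      TensorProduct.mk_apply, LinearMap.flip_apply]
    have V : (∑ k, (W.lact (lam ∘ₗ LinearMap.mulLeft ℂ (W.Sinv (p k))) a) ⊗ₜ[ℂ] q k)
        = W.Δ a := by
      obtain ⟨jj, p', q', ha⟩ := exists_rep (W.Δ a)
      calc (∑ k, (W.lact (lam ∘ₗ LinearMap.mulLeft ℂ (W.Sinv (p k))) a) ⊗ₜ[ℂ] q k)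
          = ∑ k, (∑ j, lam (W.Sinv (p k) * q' j) • p' j) ⊗ₜ[ℂ] q k := by
            refine Finset.sum_congr rfl fun k _ => ?_
            rw [W.lact_of_rep ha]
            rfl
        _ = ∑ k, ∑ j, (lam (W.Sinv (p k) * q' j) • p' j) ⊗ₜ[ℂ] q k := by
            refine Finset.sum_congr rfl fun k _ => ?_
            rw [TensorProduct.sum_tmul]
        _ = ∑ j, ∑ k, (lam (W.Sinv (p k) * q' j) • p' j) ⊗ₜ[ℂ] q k := by
            rw [Finset.sum_comm]
        _ = ∑ j, p' j ⊗ₜ[ℂ] (∑ k, lam (W.Sinv (p k) * q' j) • q k) := by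
            refine Finset.sum_congr rfl fun j _ => ?_
            rw [TensorProduct.tmul_sum]
            refine Finset.sum_congr rfl fun k _ => ?_
            rw [TensorProduct.smul_tmul]
        _ = ∑ j, p' j ⊗ₜ[ℂ] q' j := by
            refine Finset.sum_congr rfl fun j _ => ?_
            rw [hv (q' j)]
        _ = W.Δ a := ha.symm
    calc Submodule.Quotient.mk (p := crossedRel MA) (m ⊗ₜ[ℂ] a)
        = cmk MA (m ⊗ₜ[ℂ] a) := rfl
      _ = cmk MA ((TensorProduct.map ((LinearMap.mulLeft ℂ m) ∘ₗ MA.act.flip 1)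
            (LinearMap.id : A →ₗ[ℂ] A)) (W.Δ a)) := (claimQ MA m a).symm
      _ = ∑ k, cmk MA ((m * MA.act (W.lact (lam ∘ₗ LinearMap.mulLeft ℂ (W.Sinv (p k))) a) 1)
            ⊗ₜ[ℂ] q k) := by
          rw [← V, map_sum, map_sum]
          refine Finset.sum_congr rfl fun k _ => ?_
          rfl
  have hthis := LinearMap.congr_fun key t
  simp only [LinearMap.sum_apply, LinearMap.comp_apply, TensorProduct.mk_apply,
    LinearMap.flip_apply] at hthis
  calc (crossedRel MA).mkQ t
      = ∑ k, cmk MA ((Rt MA (lam ∘ₗ LinearMap.mulLeft ℂ (W.Sinv (p k))) t) ⊗ₜ[ℂ] q k) :=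
        hthis
    _ = ∑ k, cmk MA ((Rq MA (lam ∘ₗ LinearMap.mulLeft ℂ (W.Sinv (p k)))
          ((crossedRel MA).mkQ t)) ⊗ₜ[ℂ] q k) := by
        refine Finset.sum_congr rfl fun k _ => ?_
        rw [show Rq MA (lam ∘ₗ LinearMap.mulLeft ℂ (W.Sinv (p k))) ((crossedRel MA).mkQ t)
            = Rt MA (lam ∘ₗ LinearMap.mulLeft ℂ (W.Sinv (p k))) t from Rq_cmk MA _ t]

end Aux6

/-- Proposition 3.7 of [NSW]: with `N = M^A` and a normalized dual pair
`(l, λ)` of left integrals: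
(i) the relative commutant `N' ∩ M` is invariant under the `A`-action;
(ii) the centralizer of `N ⋊ 1` in `M ⋊ A` is the span of
`{x ⋊ a : x ∈ N' ∩ M, a ∈ A}`;
(iii) `N' ∩ M = A ▷ 1_M` if and only if the centralizer of `N ⋊ 1` in
`M ⋊ A` equals `1 ⋊ A`. -/
theorem relative_commutant_crossed
    {A M : Type} [Ring A] [Algebra ℂ A] [StarRing A] [StarModule ℂ A]
    [Ring M] [Algebra ℂ M] [StarRing M] [StarModule ℂ M]
    (W : WeakHopfAlgebra A) (MA : ModuleAlgebra W M) (CS : CrossedMul MA)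
    (l : A) (lam : A →ₗ[ℂ] ℂ) (hdp : W.IsDualPair l lam)
    (hnorm : W.lact lam 1 = 1) :
    (∀ x ∈ {x : M | ∀ n ∈ MA.fixed, x * n = n * x}, ∀ a : A,
      MA.act a x ∈ {x : M | ∀ n ∈ MA.fixed, x * n = n * x})
    ∧ ({y : Crossed MA | ∀ n ∈ MA.fixed, CS.mul y (iM MA n) = CS.mul (iM MA n) y}
        = ↑(Submodule.span ℂ
            {y : Crossed MA | ∃ x : M, (∀ n ∈ MA.fixed, x * n = n * x) ∧
              ∃ a : A, y = cmk MA (x ⊗ₜ[ℂ] a)}))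
    ∧ ((Set.range (fun a : A => MA.act a 1) = {x : M | ∀ n ∈ MA.fixed, x * n = n * x})
        ↔ ({y : Crossed MA | ∀ n ∈ MA.fixed, CS.mul y (iM MA n) = CS.mul (iM MA n) y}
            = {y : Crossed MA | ∃ a : A, y = iA MA a})) := by
  classical
  obtain ⟨hli, hdli, hnl, hrel4, hrel5⟩ := hdp
  obtain ⟨mm, p, q, hl⟩ := exists_rep (W.Δ l)
  have hv : ∀ c : A, ∑ k, lam (W.Sinv (p k) * c) • q k = c := by
    intro c
    have h := hrel5 c
    rw [hl] at h
    simpa using h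
  set NC : Set M := {x : M | ∀ n ∈ MA.fixed, x * n = n * x} with hNC
  set G : Set (Crossed MA) := {y | ∃ x : M, (∀ n ∈ MA.fixed, x * n = n * x) ∧
    ∃ a : A, y = cmk MA (x ⊗ₜ[ℂ] a)} with hG
  set C : Set (Crossed MA) := {y | ∀ n ∈ MA.fixed, CS.mul y (iM MA n) = CS.mul (iM MA n) y}
    with hC
  have part1 : ∀ x ∈ NC, ∀ a : A, MA.act a x ∈ NC := by
    intro x hx a n hn
    calc MA.act a x * n = MA.act a (x * n) := (hn a x).symm
      _ = MA.act a (n * x) := by rw [hx n hn]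
      _ = n * MA.act a x := MA.left_form hn a x
  have spanC : ∀ y ∈ Submodule.span ℂ G, y ∈ C := by
    intro y hy
    induction hy using Submodule.span_induction with
    | mem u hu =>
      obtain ⟨x, hx, a, rfl⟩ := hu
      intro n hn
      rw [iM_apply, claimP2 MA CS hx hn a, claimP1 MA CS n x a]
    | zero =>
      intro n hn
      simp
    | add u w hu hw ihu ihw =>
      intro n hn
      simp only [map_add, LinearMap.add_apply, ihu n hn, ihw n hn]
    | smul c u hu ihu =>
      intro n hn
      simp only [map_smul, LinearMap.smul_apply, ihu n hn]
  have xkNC : ∀ (y : Crossed MA), y ∈ C → ∀ ω : A →ₗ[ℂ] ℂ,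
      Rq MA ω y ∈ NC := by
    intro y hy ω n hn
    calc Rq MA ω y * n = Rq MA ω (CS.mul y (iM MA n)) := (R_right_all MA CS hn ω y).symm
      _ = Rq MA ω (CS.mul (iM MA n) y) := by rw [hy n hn]
      _ = n * Rq MA ω y := R_left_all MA CS n ω y
  have Cspan : ∀ y ∈ C, y ∈ Submodule.span ℂ G := by
    intro y hy
    have hrep := claimR MA lam hv y
    rw [hrep]
    refine Submodule.sum_mem _ fun k _ => Submodule.subset_span ?_
    exact ⟨Rq MA (lam ∘ₗ LinearMap.mulLeft ℂ (W.Sinv (p k))) y,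
      xkNC y hy _, q k, rfl⟩
  have part2 : C = ↑(Submodule.span ℂ G) :=
    Set.ext fun y => ⟨fun h => Cspan y h, fun h => spanC y h⟩
  refine ⟨part1, part2, ?_⟩
  constructor
  · intro hrange
    apply Set.ext
    intro y
    constructor
    · intro hyC
      have hrep := claimR MA lam hv y
      have hxk : ∀ k, ∃ b : A, MA.act b 1
          = Rq MA (lam ∘ₗ LinearMap.mulLeft ℂ (W.Sinv (p k))) y := by
        intro k
        have := xkNC y hyC (lam ∘ₗ LinearMap.mulLeft ℂ (W.Sinv (p k)))
        rw [← hrange] at this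
        exact this
      choose b hb using hxk
      refine ⟨∑ k, W.swIdS (b k) * q k, ?_⟩
      rw [hrep, map_sum]
      refine Finset.sum_congr rfl fun k _ => ?_
      rw [iA_apply, ← hb k]
      calc cmk MA (MA.act (b k) 1 ⊗ₜ[ℂ] q k)
          = cmk MA ((1 * MA.act (W.swIdS (b k)) 1) ⊗ₜ[ℂ] q k) := by
            rw [← MA.act_unit, one_mul]
        _ = cmk MA ((1 : M) ⊗ₜ[ℂ] (W.swIdS (b k) * q k)) :=
            rel_eq MA (W.swIdS_mem_AL (b k)) 1 (q k)
    · rintro ⟨a, rfl⟩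
      intro n hn
      rw [iA_apply, iM_apply, claimP2 MA CS (fun n' _ => by rw [one_mul, mul_one]) hn a,
        claimP1]
  · intro hCA
    apply Set.ext
    intro x
    constructor
    · rintro ⟨b, rfl⟩
      intro n hn
      exact (MA.MR_comm_fixed hn b).symm
    · intro hx
      have hmem : cmk MA (x ⊗ₜ[ℂ] (1 : A)) ∈ C := by
        intro n hn
        rw [iM_apply, claimP2 MA CS hx hn 1, claimP1]
      rw [hCA] at hmem
      obtain ⟨a, ha⟩ := hmem
      have e1 : Rq MA lam (cmk MA (x ⊗ₜ[ℂ] (1 : A))) = x := by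
        rw [Rq_cmk, Rt_tmul, hnorm, MA.act_one, mul_one]
      have e2 : Rq MA lam (iA MA a) = MA.act (W.lact lam a) 1 := by
        rw [iA_apply, Rq_cmk, Rt_tmul, one_mul]
      refine ⟨W.lact lam a, ?_⟩
      show MA.act (W.lact lam a) 1 = x
      rw [← e2, ← ha, e1]
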